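/- Let F : (0, ε) → ℝ be a C¹ function that is strictly monotone with strictly monotone derivative on (0, ε), and suppose F(t) → 0 as t → 0⁺. Then t·F'(t) → 0 as t → 0⁺. -/

import Mathlib

open Set Filter

private lemma aux_mul_tendsto (c : ℝ) (hc : 0 < c) :
    Tendsto (fun t : ℝ => c * t) (nhdsWithin 0 (Set.Ioi 0)) (nhdsWithin 0 (Set.Ioi 0)) := by
  apply tendsto_nhdsWithin_of_tendsto_nhds_of_eventually_within
  · have h : Tendsto (fun t : ℝ => c * t) (nhds 0) (nhds (c * 0)) :=
      (continuous_const.mul continuous_id).tendsto 0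
    simpa using h.mono_left nhdsWithin_le_nhds
  · filter_upwards [self_mem_nhdsWithin] with t ht
    exact mul_pos hc ht

/-- If `F : (0,ε) → ℝ` is `C¹`, strictly monotone with strictly monotone derivative, and
`F(t) → 0` as `t → 0⁺`, then `t·F'(t) → 0` as `t → 0⁺`. -/
theorem stmt_3 (ε : ℝ) (hε : 0 < ε) (F : ℝ → ℝ)
    (hF : ContDiffOn ℝ 1 F (Set.Ioo 0 ε))
    (hmono : StrictMonoOn F (Set.Ioo 0 ε) ∨ StrictAntiOn F (Set.Ioo 0 ε))
    (hmono' : StrictMonoOn (deriv F) (Set.Ioo 0 ε) ∨ StrictAntiOn (deriv F) (Set.Ioo 0 ε))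
    (hlim : Tendsto F (nhdsWithin 0 (Set.Ioi 0)) (nhds 0)) :
    Tendsto (fun t => t * deriv F t) (nhdsWithin 0 (Set.Ioi 0)) (nhds 0) := by
  have hdiff : DifferentiableOn ℝ F (Set.Ioo 0 ε) := hF.differentiableOn one_ne_zero
  -- limits of the two comparison functions
  have hhalf : Tendsto (fun t : ℝ => F (t / 2)) (nhdsWithin 0 (Set.Ioi 0)) (nhds 0) := by
    have h := hlim.comp (aux_mul_tendsto (1/2) (by norm_num))
    refine h.congr fun t => ?_
    show F ((1/2) * t) = F (t / 2)
    congr 1; ring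
  have hdbl : Tendsto (fun t : ℝ => F (2 * t)) (nhdsWithin 0 (Set.Ioi 0)) (nhds 0) := by
    have h := hlim.comp (aux_mul_tendsto 2 (by norm_num))
    simpa [Function.comp_def] using h
  have hlo : Tendsto (fun t : ℝ => 2 * (F t - F (t / 2))) (nhdsWithin 0 (Set.Ioi 0)) (nhds 0) := by
    have h := (hlim.sub hhalf).const_mul 2
    simpa using h
  have hhi : Tendsto (fun t : ℝ => F (2 * t) - F t) (nhdsWithin 0 (Set.Ioi 0)) (nhds 0) := by
    simpa using hdbl.sub hlim
  -- MVT data for each small t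
  have key : ∀ t ∈ Set.Ioo (0 : ℝ) (ε / 2),
      ∃ c ∈ Set.Ioo (t / 2) t, ∃ d ∈ Set.Ioo t (2 * t),
        2 * (F t - F (t / 2)) = t * deriv F c ∧ F (2 * t) - F t = t * deriv F d := by
    intro t ht
    obtain ⟨ht0, htε⟩ := ht
    have h1 : t / 2 < t := by linarith
    have h2 : t < 2 * t := by linarith
    have hsub1 : Set.Icc (t / 2) t ⊆ Set.Ioo 0 ε := fun x hx =>
      ⟨by linarith [hx.1], by linarith [hx.2]⟩
    have hsub2 : Set.Icc t (2 * t) ⊆ Set.Ioo 0 ε := fun x hx =>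
      ⟨by linarith [hx.1], by linarith [hx.2]⟩
    obtain ⟨c, hc, hceq⟩ := exists_deriv_eq_slope F h1 (hF.continuousOn.mono hsub1)
      (hdiff.mono (Set.Ioo_subset_Icc_self.trans hsub1))
    obtain ⟨d, hd, hdeq⟩ := exists_deriv_eq_slope F h2 (hF.continuousOn.mono hsub2)
      (hdiff.mono (Set.Ioo_subset_Icc_self.trans hsub2))
    rw [eq_div_iff (by linarith : t - t / 2 ≠ 0)] at hceq
    rw [eq_div_iff (by linarith : 2 * t - t ≠ 0)] at hdeq
    exact ⟨c, hc, d, hd, by rw [← hceq]; ring, by rw [← hdeq]; ring⟩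
  have hmem : Set.Ioo (0 : ℝ) (ε / 2) ∈ nhdsWithin (0 : ℝ) (Set.Ioi 0) :=
    Ioo_mem_nhdsGT (by linarith)
  rcases hmono' with h | h
  · refine tendsto_of_tendsto_of_tendsto_of_le_of_le' hlo hhi ?_ ?_
    · filter_upwards [hmem] with t ht
      obtain ⟨c, hc, d, hd, hce, hde⟩ := key t ht
      have hcm : c ∈ Set.Ioo 0 ε := ⟨by linarith [hc.1, ht.1], by linarith [hc.2, ht.2]⟩
      have htm : t ∈ Set.Ioo 0 ε := ⟨ht.1, by linarith [ht.2]⟩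
      have := (h hcm htm hc.2).le
      rw [hce]
      exact mul_le_mul_of_nonneg_left this ht.1.le
    · filter_upwards [hmem] with t ht
      obtain ⟨c, hc, d, hd, hce, hde⟩ := key t ht
      have hdm : d ∈ Set.Ioo 0 ε := ⟨by linarith [hd.1, ht.1], by linarith [hd.2, ht.2]⟩
      have htm : t ∈ Set.Ioo 0 ε := ⟨ht.1, by linarith [ht.2]⟩
      have := (h htm hdm hd.1).le
      rw [hde]
      exact mul_le_mul_of_nonneg_left this ht.1.le
  · refine tendsto_of_tendsto_of_tendsto_of_le_of_le' hhi hlo ?_ ?_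
    · filter_upwards [hmem] with t ht
      obtain ⟨c, hc, d, hd, hce, hde⟩ := key t ht
      have hdm : d ∈ Set.Ioo 0 ε := ⟨by linarith [hd.1, ht.1], by linarith [hd.2, ht.2]⟩
      have htm : t ∈ Set.Ioo 0 ε := ⟨ht.1, by linarith [ht.2]⟩
      have := (h htm hdm hd.1).le
      rw [hde]
      exact mul_le_mul_of_nonneg_left this ht.1.le
    · filter_upwards [hmem] with t ht
      obtain ⟨c, hc, d, hd, hce, hde⟩ := key t ht
      have hcm : c ∈ Set.Ioo 0 ε := ⟨by linarith [hc.1, ht.1], by linarith [hc.2, ht.2]⟩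
      have htm : t ∈ Set.Ioo 0 ε := ⟨ht.1, by linarith [ht.2]⟩
      have := (h hcm htm hc.2).le
      rw [hce]
      exact mul_le_mul_of_nonneg_left this ht.1.le
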